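/- There exists a constant C, independent of ε and N, such that ‖∇(u − u^I)‖_{L^1(Ω_1)} ≤ C N^{-1} ln N, where the gradient of the piecewise bilinear interpolant is taken rectangle-by-rectangle. -/

import Mathlib

open MeasureTheory Real Set

noncomputable section

/-- First-order partial derivative in the x-direction. -/
def pdx (f : ℝ × ℝ → ℝ) : ℝ × ℝ → ℝ := fun p => fderiv ℝ f p (1, 0)

/-- First-order partial derivative in the y-direction. -/
def pdy (f : ℝ × ℝ → ℝ) : ℝ × ℝ → ℝ := fun p => fderiv ℝ f p (0, 1)

/-- Mixed partial derivative `∂_x^i ∂_y^j`. -/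
def pd (i j : ℕ) (f : ℝ × ℝ → ℝ) : ℝ × ℝ → ℝ := pdx^[i] (pdy^[j] f)

/-- A function coincides with a bilinear polynomial `a + bx + cy + dxy` on a set. -/
def IsBilinearOn (f : ℝ × ℝ → ℝ) (s : Set (ℝ × ℝ)) : Prop :=
  ∃ a b c d : ℝ, ∀ p ∈ s, f p = a + b * p.1 + c * p.2 + d * (p.1 * p.2)

/-- The Shishkin-mesh node abscissas. -/
def meshX (N : ℕ) (lx : ℝ) (i : ℕ) : ℝ :=
  if i ≤ N / 2 then 2 * (i : ℝ) * (1 - lx) / (N : ℝ)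
  else 1 - 2 * ((N : ℝ) - (i : ℝ)) * lx / (N : ℝ)

/-- The Shishkin-mesh node ordinates. -/
def meshY (N : ℕ) (ly : ℝ) (j : ℕ) : ℝ :=
  if j ≤ N / 3 then 3 * (j : ℝ) * ly / (N : ℝ)
  else if j ≤ 2 * N / 3 then
    (3 * (j : ℝ) / (N : ℝ) - 1) - 3 * (2 * (j : ℝ) - (N : ℝ)) * ly / (N : ℝ)
  else 1 - 3 * ((N : ℝ) - (j : ℝ)) * ly / (N : ℝ)

/-- The mesh rectangle `τ_{ij} = [x_{i-1}, x_i] × [y_{j-1}, y_j]`. -/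
def meshRect (N : ℕ) (lx ly : ℝ) (i j : ℕ) : Set (ℝ × ℝ) :=
  Icc (meshX N lx (i - 1)) (meshX N lx i) ×ˢ Icc (meshY N ly (j - 1)) (meshY N ly j)

def OmegaS (lx ly : ℝ) : Set (ℝ × ℝ) := Icc 0 (1 - lx) ×ˢ Icc ly (1 - ly)
def Omega1R (lx ly : ℝ) : Set (ℝ × ℝ) := Icc (1 - lx) 1 ×ˢ Icc ly (1 - ly)
def Omega2R (lx ly : ℝ) : Set (ℝ × ℝ) := Icc 0 (1 - lx) ×ˢ (Icc 0 ly ∪ Icc (1 - ly) 1)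
def Omega12R (lx ly : ℝ) : Set (ℝ × ℝ) := Icc (1 - lx) 1 ×ˢ (Icc 0 ly ∪ Icc (1 - ly) 1)

/-- Basic assumptions on the Shishkin mesh data (with `ρ = 2.5`). -/
def ShishkinHyp (N : ℕ) (ε β lx ly : ℝ) : Prop :=
  0 < N ∧ 6 ∣ N ∧ 0 < ε ∧ ε ≤ (N : ℝ)⁻¹ ∧ 0 < β ∧
  lx = 2.5 * ε / β * Real.log (N : ℝ) ∧ ly = 2.5 * Real.sqrt ε * Real.log (N : ℝ) ∧
  lx ≤ 1 / 2 ∧ ly ≤ 1 / 4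

/-- `gI` is the piecewise-bilinear nodal interpolant of `g` on the Shishkin mesh. -/
def IsMeshInterpolant (N : ℕ) (lx ly : ℝ) (g gI : ℝ × ℝ → ℝ) : Prop :=
  Continuous gI ∧
  (∀ i j : ℕ, 1 ≤ i → i ≤ N → 1 ≤ j → j ≤ N → IsBilinearOn gI (meshRect N lx ly i j)) ∧
  (∀ i j : ℕ, i ≤ N → j ≤ N →
    gI (meshX N lx i, meshY N ly j) = g (meshX N lx i, meshY N ly j))

def UnitSq : Set (ℝ × ℝ) := Icc 0 1 ×ˢ Icc 0 1

/-- Bounds on the regular part `S` of the solution decomposition. -/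
def BoundS (C0 : ℝ) (S : ℝ × ℝ → ℝ) : Prop :=
  ContDiff ℝ 3 S ∧ ∀ i j : ℕ, i + j ≤ 3 → ∀ p ∈ UnitSq, |pd i j S p| ≤ C0

/-- Bounds on the exponential-layer part `E₁`. -/
def BoundE1 (ε β C0 : ℝ) (E1 : ℝ × ℝ → ℝ) : Prop :=
  ContDiff ℝ 3 E1 ∧ ∀ i j : ℕ, i + j ≤ 3 → ∀ p ∈ UnitSq,
    |pd i j E1 p| ≤ C0 * ε ^ (-(i : ℝ)) * Real.exp (-β * (1 - p.1) / ε)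

/-- Bounds on the characteristic-layer part `E₂`. -/
def BoundE2 (ε C0 : ℝ) (E2 : ℝ × ℝ → ℝ) : Prop :=
  ContDiff ℝ 3 E2 ∧ ∀ i j : ℕ, i + j ≤ 3 → ∀ p ∈ UnitSq,
    |pd i j E2 p| ≤ C0 * ε ^ (-(j : ℝ) / 2) *
      (Real.exp (-p.2 / Real.sqrt ε) + Real.exp (-(1 - p.2) / Real.sqrt ε))

/-- Bounds on the corner-layer part `E₁₂`. -/
def BoundE12 (ε β C0 : ℝ) (E12 : ℝ × ℝ → ℝ) : Prop :=
  ContDiff ℝ 3 E12 ∧ ∀ i j : ℕ, i + j ≤ 3 → ∀ p ∈ UnitSq,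
    |pd i j E12 p| ≤ C0 * ε ^ (-((i : ℝ) + (j : ℝ) / 2)) * Real.exp (-β * (1 - p.1) / ε) *
      (Real.exp (-p.2 / Real.sqrt ε) + Real.exp (-(1 - p.2) / Real.sqrt ε))

/-- Membership in the bilinear finite element space `V^N`. -/
def MemVN (N : ℕ) (lx ly : ℝ) (v : ℝ × ℝ → ℝ) : Prop :=
  Continuous v ∧
  (∀ p ∈ UnitSq, (p.1 = 0 ∨ p.1 = 1 ∨ p.2 = 0 ∨ p.2 = 1) → v p = 0) ∧
  ∀ i j : ℕ, 1 ≤ i → i ≤ N → 1 ≤ j → j ≤ N → IsBilinearOn v (meshRect N lx ly i j)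

/-- The SDFEM stabilization parameter `δ`. -/
def sdDelta (N : ℕ) (lx ly Cstar : ℝ) : ℝ × ℝ → ℝ :=
  (OmegaS lx ly ∪ Omega2R lx ly).indicator fun _ => Cstar / (N : ℝ)

/-- The SDFEM bilinear form `B`. -/
def Bform (N : ℕ) (lx ly ε b c Cstar : ℝ) (v w : ℝ × ℝ → ℝ) : ℝ :=
  ∫ p in UnitSq,
    (ε * (pdx v p * pdx w p + pdy v p * pdy w p)
      + (b * pdx v p + c * v p) * w p
      + (b * pdx v p + c * v p) * (sdDelta N lx ly Cstar p * (b * pdx w p)))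

/-- The square of the SDFEM energy norm `|||·|||`. -/
def energySq (N : ℕ) (lx ly ε b c Cstar : ℝ) (v : ℝ × ℝ → ℝ) : ℝ :=
  ∫ p in UnitSq,
    ((ε + b ^ 2 * sdDelta N lx ly Cstar p) * pdx v p ^ 2
      + ε * pdy v p ^ 2 + c * v p ^ 2)

/-- The neighbourhood `Ω₀` of the point `(xs, ys)`. -/
def OmegaZero (N : ℕ) (xs ys K sx sy : ℝ) : Set (ℝ × ℝ) :=
  {p : ℝ × ℝ | p ∈ Ioo (0 : ℝ) 1 ×ˢ Ioo (0 : ℝ) 1 ∧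
    p.1 - xs ≤ K * sx * Real.log (N : ℝ) ∧ |p.2 - ys| ≤ K * sy * Real.log (N : ℝ)}

/-- `Ω₀'`: the smallest union of mesh rectangles containing `Ω₀`. -/
def OmegaZero' (N : ℕ) (lx ly xs ys K sx sy : ℝ) : Set (ℝ × ℝ) :=
  ⋃ i ∈ Finset.Icc 1 N, ⋃ j ∈ Finset.Icc 1 N,
    ⋃ (_ : volume (OmegaZero N xs ys K sx sy ∩ meshRect N lx ly i j) ≠ 0),
      meshRect N lx ly i j


/-! ### Auxiliary lemmas -/

section Aux

lemma hasDerivAt_pdx {f : ℝ × ℝ → ℝ} (t y : ℝ) (hf : DifferentiableAt ℝ f (t, y)) :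
    HasDerivAt (fun s => f (s, y)) (pdx f (t, y)) t :=
  hf.hasFDerivAt.comp_hasDerivAt t ((hasDerivAt_id t).prodMk (hasDerivAt_const t y))

lemma hasDerivAt_pdy {f : ℝ × ℝ → ℝ} (x t : ℝ) (hf : DifferentiableAt ℝ f (x, t)) :
    HasDerivAt (fun s => f (x, s)) (pdy f (x, t)) t :=
  hf.hasFDerivAt.comp_hasDerivAt t ((hasDerivAt_const t x).prodMk (hasDerivAt_id t))

lemma contDiff_pdx {f : ℝ × ℝ → ℝ} {n : ℕ} (hf : ContDiff ℝ (n+1) f) : ContDiff ℝ n (pdx f) :=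
  (hf.fderiv_right (by norm_cast)).clm_apply contDiff_const

lemma contDiff_pdy {f : ℝ × ℝ → ℝ} {n : ℕ} (hf : ContDiff ℝ (n+1) f) : ContDiff ℝ n (pdy f) :=
  (hf.fderiv_right (by norm_cast)).clm_apply contDiff_const

lemma clairaut {f : ℝ × ℝ → ℝ} (hf : ContDiff ℝ 3 f) (p : ℝ × ℝ) :
    pdy (pdx f) p = pdx (pdy f) p := by
  have hd : DifferentiableAt ℝ (fderiv ℝ f) p := by
    have : ContDiff ℝ 2 (fderiv ℝ f) := hf.fderiv_right (by norm_num)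
    exact (this.differentiable (by norm_num)).differentiableAt
  have hsymm : IsSymmSndFDerivAt ℝ f p :=
    (hf.contDiffAt).isSymmSndFDerivAt (by norm_num)
  have h1 : fderiv ℝ (pdx f) p = (fderiv ℝ f p).comp (fderiv ℝ (fun _ : ℝ × ℝ => ((1:ℝ),(0:ℝ))) p)
      + (fderiv ℝ (fderiv ℝ f) p).flip ((1:ℝ),(0:ℝ)) :=
    fderiv_clm_apply hd (differentiableAt_const _)
  have h2 : fderiv ℝ (pdy f) p = (fderiv ℝ f p).comp (fderiv ℝ (fun _ : ℝ × ℝ => ((0:ℝ),(1:ℝ))) p)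
      + (fderiv ℝ (fderiv ℝ f) p).flip ((0:ℝ),(1:ℝ)) :=
    fderiv_clm_apply hd (differentiableAt_const _)
  simp only [pdx, pdy, h1, h2, fderiv_const, fderiv_const_apply, Pi.zero_apply,
    ContinuousLinearMap.comp_zero, ContinuousLinearMap.zero_comp, zero_add,
    ContinuousLinearMap.add_apply, ContinuousLinearMap.flip_apply, ContinuousLinearMap.zero_apply]
  exact hsymm.eq _ _

lemma pdx_sub {f g : ℝ × ℝ → ℝ} {p : ℝ × ℝ} (hf : DifferentiableAt ℝ f p)
    (hg : DifferentiableAt ℝ g p) : pdx (fun q => f q - g q) p = pdx f p - pdx g p := by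
  simp only [pdx]; rw [fderiv_fun_sub hf hg]; rfl

lemma pdy_sub {f g : ℝ × ℝ → ℝ} {p : ℝ × ℝ} (hf : DifferentiableAt ℝ f p)
    (hg : DifferentiableAt ℝ g p) : pdy (fun q => f q - g q) p = pdy f p - pdy g p := by
  simp only [pdy]; rw [fderiv_fun_sub hf hg]; rfl

lemma pdx_add4 {f1 f2 f3 f4 : ℝ × ℝ → ℝ} (h1 : Differentiable ℝ f1) (h2 : Differentiable ℝ f2)
    (h3 : Differentiable ℝ f3) (h4 : Differentiable ℝ f4) (p : ℝ × ℝ) :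
    pdx (fun q => f1 q + f2 q + f3 q + f4 q) p = pdx f1 p + pdx f2 p + pdx f3 p + pdx f4 p := by
  simp only [pdx]
  rw [fderiv_fun_add (f := fun q => f1 q + f2 q + f3 q) (((h1 p).add (h2 p)).add (h3 p)) (h4 p),
    fderiv_fun_add (f := fun q => f1 q + f2 q) ((h1 p).add (h2 p)) (h3 p), fderiv_fun_add (h1 p) (h2 p)]
  rfl

lemma pdy_add4 {f1 f2 f3 f4 : ℝ × ℝ → ℝ} (h1 : Differentiable ℝ f1) (h2 : Differentiable ℝ f2)
    (h3 : Differentiable ℝ f3) (h4 : Differentiable ℝ f4) (p : ℝ × ℝ) :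
    pdy (fun q => f1 q + f2 q + f3 q + f4 q) p = pdy f1 p + pdy f2 p + pdy f3 p + pdy f4 p := by
  simp only [pdy]
  rw [fderiv_fun_add (f := fun q => f1 q + f2 q + f3 q) (((h1 p).add (h2 p)).add (h3 p)) (h4 p),
    fderiv_fun_add (f := fun q => f1 q + f2 q) ((h1 p).add (h2 p)) (h3 p), fderiv_fun_add (h1 p) (h2 p)]
  rfl

/-- If `z` lies between `a` and `b` then `|w - z| ≤ max |w - a| |w - b|`. -/
lemma abs_sub_le_max_of_between {a b z w : ℝ} (h1 : min a b ≤ z) (h2 : z ≤ max a b) :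
    |w - z| ≤ max |w - a| |w - b| := by
  have ha1 : w - a ≤ |w - a| := le_abs_self _
  have ha2 : a - w ≤ |w - a| := by rw [abs_sub_comm]; exact le_abs_self _
  have hb1 : w - b ≤ |w - b| := le_abs_self _
  have hb2 : b - w ≤ |w - b| := by rw [abs_sub_comm]; exact le_abs_self _
  rw [abs_sub_le_iff]
  rcases le_total a b with hab | hab <;>
    simp only [min_eq_left, min_eq_right, max_eq_left, max_eq_right, hab] at h1 h2 <;>
    constructor <;>
    first
      | exact le_trans (by linarith) (le_max_left _ _)
      | exact le_trans (by linarith) (le_max_right _ _)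

/-- MVT-type Lipschitz bound on an interval. -/
lemma abs_sub_le_of_deriv_le {g g' : ℝ → ℝ} {lo hi M : ℝ}
    (hg : ∀ t ∈ Icc lo hi, HasDerivAt g (g' t) t) (hM : ∀ t ∈ Icc lo hi, |g' t| ≤ M)
    {s t : ℝ} (hs : s ∈ Icc lo hi) (ht : t ∈ Icc lo hi) : |g t - g s| ≤ M * |t - s| := by
  have := Convex.norm_image_sub_le_of_norm_hasDerivWithin_le
    (f := g) (f' := g') (fun x hx => (hg x hx).hasDerivWithinAt)
    (fun x hx => hM x hx) (convex_Icc lo hi) hs ht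
  simpa [Real.norm_eq_abs] using this

lemma bilin_hasFDerivAt (a b c d : ℝ) (p : ℝ × ℝ) :
    HasFDerivAt (fun q : ℝ × ℝ => a + b * q.1 + c * q.2 + d * (q.1 * q.2))
      (b • (ContinuousLinearMap.fst ℝ ℝ ℝ) + c • (ContinuousLinearMap.snd ℝ ℝ ℝ)
        + d • (p.1 • (ContinuousLinearMap.snd ℝ ℝ ℝ)
              + p.2 • (ContinuousLinearMap.fst ℝ ℝ ℝ))) p := by
  have h1 : HasFDerivAt (fun q : ℝ × ℝ => q.1) (ContinuousLinearMap.fst ℝ ℝ ℝ) p := hasFDerivAt_fst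
  have h2 : HasFDerivAt (fun q : ℝ × ℝ => q.2) (ContinuousLinearMap.snd ℝ ℝ ℝ) p := hasFDerivAt_snd
  have := (((hasFDerivAt_const a p).add (h1.const_mul b)).add (h2.const_mul c)).add
    ((h1.mul h2).const_mul d)
  exact this.congr_fderiv (by ext v <;> simp)

lemma bilin_differentiableAt {uI : ℝ × ℝ → ℝ} {x0 x1 y0 y1 : ℝ}
    (hbil : IsBilinearOn uI (Icc x0 x1 ×ˢ Icc y0 y1))
    {p : ℝ × ℝ} (hp : p ∈ Ioo x0 x1 ×ˢ Ioo y0 y1) : DifferentiableAt ℝ uI p := by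
  obtain ⟨a, b, c, d, hf⟩ := hbil
  have hev : (fun q : ℝ × ℝ => a + b * q.1 + c * q.2 + d * (q.1 * q.2)) =ᶠ[nhds p] uI := by
    filter_upwards [((isOpen_Ioo.prod isOpen_Ioo).mem_nhds hp)] with q hq
    exact (hf q (prod_mono Ioo_subset_Icc_self Ioo_subset_Icc_self hq)).symm
  exact (bilin_hasFDerivAt a b c d p).differentiableAt.congr_of_eventuallyEq hev.symm

/-- On the interior of a rectangle, `pdx` of the bilinear interpolant lies between
two values of `pdx u` attained inside the rectangle. -/
lemma interp_pdx {u uI : ℝ × ℝ → ℝ} {x0 x1 y0 y1 : ℝ} (hx : x0 < x1) (hy : y0 < y1)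
    (hu : Differentiable ℝ u)
    (hbil : IsBilinearOn uI (Icc x0 x1 ×ˢ Icc y0 y1))
    (hc00 : uI (x0, y0) = u (x0, y0)) (hc10 : uI (x1, y0) = u (x1, y0))
    (hc01 : uI (x0, y1) = u (x0, y1)) (hc11 : uI (x1, y1) = u (x1, y1))
    {p : ℝ × ℝ} (hp : p ∈ Ioo x0 x1 ×ˢ Ioo y0 y1) :
    ∃ q0 ∈ Icc x0 x1 ×ˢ Icc y0 y1, ∃ q1 ∈ Icc x0 x1 ×ˢ Icc y0 y1,
      min (pdx u q0) (pdx u q1) ≤ pdx uI p ∧ pdx uI p ≤ max (pdx u q0) (pdx u q1) := by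
  obtain ⟨a, b, c, d, hf⟩ := hbil
  have hxne : x1 - x0 ≠ 0 := sub_ne_zero.2 hx.ne'
  have hsub : Ioo x0 x1 ×ˢ Ioo y0 y1 ⊆ Icc x0 x1 ×ˢ Icc y0 y1 :=
    prod_mono Ioo_subset_Icc_self Ioo_subset_Icc_self
  have hev : uI =ᶠ[nhds p] fun q : ℝ × ℝ => a + b * q.1 + c * q.2 + d * (q.1 * q.2) := by
    filter_upwards [((isOpen_Ioo.prod isOpen_Ioo).mem_nhds hp)] with q hq
    exact hf q (hsub hq)
  have hA : pdx uI p = b + d * p.2 := by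
    have h1 : fderiv ℝ uI p
        = fderiv ℝ (fun q : ℝ × ℝ => a + b * q.1 + c * q.2 + d * (q.1 * q.2)) p :=
      hev.fderiv_eq
    have h2 := (bilin_hasFDerivAt a b c d p).fderiv
    simp only [pdx, h1, h2]
    simp
  have hmvt : ∀ y : ℝ, y ∈ Icc y0 y1 → uI (x0, y) = u (x0, y) → uI (x1, y) = u (x1, y) →
      ∃ ξ ∈ Ioo x0 x1, pdx u (ξ, y) = b + d * y := by
    intro y hyy hl hr
    have hcont : ContinuousOn (fun t => u (t, y)) (Icc x0 x1) := by
      apply Continuous.continuousOn; have := hu.continuous; fun_prop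
    obtain ⟨ξ, hξ, hslope⟩ := exists_hasDerivAt_eq_slope (fun t => u (t, y))
      (fun t => pdx u (t, y)) hx hcont (fun t _ => hasDerivAt_pdx t y (hu _))
    refine ⟨ξ, hξ, ?_⟩
    have hkey : u (x1, y) - u (x0, y) = (b + d * y) * (x1 - x0) := by
      have m0 : ((x0, y) : ℝ × ℝ) ∈ Icc x0 x1 ×ˢ Icc y0 y1 := ⟨⟨le_rfl, hx.le⟩, hyy⟩
      have m1 : ((x1, y) : ℝ × ℝ) ∈ Icc x0 x1 ×ˢ Icc y0 y1 := ⟨⟨hx.le, le_rfl⟩, hyy⟩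
      rw [← hl, ← hr, hf _ m0, hf _ m1]; ring
    rw [hslope, hkey, mul_div_assoc, div_self hxne, mul_one]
  obtain ⟨ξ0, hξ0, hs0⟩ := hmvt y0 ⟨le_rfl, hy.le⟩ hc00 hc10
  obtain ⟨ξ1, hξ1, hs1⟩ := hmvt y1 ⟨hy.le, le_rfl⟩ hc01 hc11
  refine ⟨(ξ0, y0), ⟨Ioo_subset_Icc_self hξ0, ⟨le_rfl, hy.le⟩⟩,
          (ξ1, y1), ⟨Ioo_subset_Icc_self hξ1, ⟨hy.le, le_rfl⟩⟩, ?_, ?_⟩ <;>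
    rw [hA, hs0, hs1] <;> rcases le_total 0 d with hd | hd
  · have : d * y0 ≤ d * p.2 := mul_le_mul_of_nonneg_left hp.2.1.le hd
    exact le_trans (min_le_left _ _) (by linarith)
  · have : d * y1 ≤ d * p.2 := mul_le_mul_of_nonpos_left hp.2.2.le hd
    exact le_trans (min_le_right _ _) (by linarith)
  · have : d * p.2 ≤ d * y1 := mul_le_mul_of_nonneg_left hp.2.2.le hd
    exact le_trans (by linarith) (le_max_right _ _)
  · have : d * p.2 ≤ d * y0 := mul_le_mul_of_nonpos_left hp.2.1.le hd
    exact le_trans (by linarith) (le_max_left _ _)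

/-- Same for `pdy`. -/
lemma interp_pdy {u uI : ℝ × ℝ → ℝ} {x0 x1 y0 y1 : ℝ} (hx : x0 < x1) (hy : y0 < y1)
    (hu : Differentiable ℝ u)
    (hbil : IsBilinearOn uI (Icc x0 x1 ×ˢ Icc y0 y1))
    (hc00 : uI (x0, y0) = u (x0, y0)) (hc10 : uI (x1, y0) = u (x1, y0))
    (hc01 : uI (x0, y1) = u (x0, y1)) (hc11 : uI (x1, y1) = u (x1, y1))
    {p : ℝ × ℝ} (hp : p ∈ Ioo x0 x1 ×ˢ Ioo y0 y1) :
    ∃ q0 ∈ Icc x0 x1 ×ˢ Icc y0 y1, ∃ q1 ∈ Icc x0 x1 ×ˢ Icc y0 y1,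
      min (pdy u q0) (pdy u q1) ≤ pdy uI p ∧ pdy uI p ≤ max (pdy u q0) (pdy u q1) := by
  obtain ⟨a, b, c, d, hf⟩ := hbil
  have hyne : y1 - y0 ≠ 0 := sub_ne_zero.2 hy.ne'
  have hsub : Ioo x0 x1 ×ˢ Ioo y0 y1 ⊆ Icc x0 x1 ×ˢ Icc y0 y1 :=
    prod_mono Ioo_subset_Icc_self Ioo_subset_Icc_self
  have hev : uI =ᶠ[nhds p] fun q : ℝ × ℝ => a + b * q.1 + c * q.2 + d * (q.1 * q.2) := by
    filter_upwards [((isOpen_Ioo.prod isOpen_Ioo).mem_nhds hp)] with q hq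
    exact hf q (hsub hq)
  have hA : pdy uI p = c + d * p.1 := by
    have h1 : fderiv ℝ uI p
        = fderiv ℝ (fun q : ℝ × ℝ => a + b * q.1 + c * q.2 + d * (q.1 * q.2)) p :=
      hev.fderiv_eq
    have h2 := (bilin_hasFDerivAt a b c d p).fderiv
    simp only [pdy, h1, h2]
    simp
  have hmvt : ∀ x : ℝ, x ∈ Icc x0 x1 → uI (x, y0) = u (x, y0) → uI (x, y1) = u (x, y1) →
      ∃ η ∈ Ioo y0 y1, pdy u (x, η) = c + d * x := by
    intro x hxx hl hr
    have hcont : ContinuousOn (fun t => u (x, t)) (Icc y0 y1) := by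
      apply Continuous.continuousOn; have := hu.continuous; fun_prop
    obtain ⟨η, hη, hslope⟩ := exists_hasDerivAt_eq_slope (fun t => u (x, t))
      (fun t => pdy u (x, t)) hy hcont (fun t _ => hasDerivAt_pdy x t (hu _))
    refine ⟨η, hη, ?_⟩
    have hkey : u (x, y1) - u (x, y0) = (c + d * x) * (y1 - y0) := by
      have m0 : ((x, y0) : ℝ × ℝ) ∈ Icc x0 x1 ×ˢ Icc y0 y1 := ⟨hxx, ⟨le_rfl, hy.le⟩⟩
      have m1 : ((x, y1) : ℝ × ℝ) ∈ Icc x0 x1 ×ˢ Icc y0 y1 := ⟨hxx, ⟨hy.le, le_rfl⟩⟩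
      rw [← hl, ← hr, hf _ m0, hf _ m1]; ring
    rw [hslope, hkey, mul_div_assoc, div_self hyne, mul_one]
  obtain ⟨η0, hη0, hs0⟩ := hmvt x0 ⟨le_rfl, hx.le⟩ hc00 hc01
  obtain ⟨η1, hη1, hs1⟩ := hmvt x1 ⟨hx.le, le_rfl⟩ hc10 hc11
  refine ⟨(x0, η0), ⟨⟨le_rfl, hx.le⟩, Ioo_subset_Icc_self hη0⟩,
          (x1, η1), ⟨⟨hx.le, le_rfl⟩, Ioo_subset_Icc_self hη1⟩, ?_, ?_⟩ <;>
    rw [hA, hs0, hs1] <;> rcases le_total 0 d with hd | hd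
  · have : d * x0 ≤ d * p.1 := mul_le_mul_of_nonneg_left hp.1.1.le hd
    exact le_trans (min_le_left _ _) (by linarith)
  · have : d * x1 ≤ d * p.1 := mul_le_mul_of_nonpos_left hp.1.2.le hd
    exact le_trans (min_le_right _ _) (by linarith)
  · have : d * p.1 ≤ d * x1 := mul_le_mul_of_nonneg_left hp.1.2.le hd
    exact le_trans (by linarith) (le_max_right _ _)
  · have : d * p.1 ≤ d * x0 := mul_le_mul_of_nonpos_left hp.1.1.le hd
    exact le_trans (by linarith) (le_max_left _ _)

/-- Anisotropic oscillation bound for `pdx g` over a rectangle. -/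
lemma pdx_osc {g : ℝ × ℝ → ℝ} (hg : ContDiff ℝ 3 g) {x0 x1 y0 y1 Mxx Mxy : ℝ}
    (hMxx : ∀ q ∈ Icc x0 x1 ×ˢ Icc y0 y1, |pdx (pdx g) q| ≤ Mxx)
    (hMxy : ∀ q ∈ Icc x0 x1 ×ˢ Icc y0 y1, |pdx (pdy g) q| ≤ Mxy)
    {p q : ℝ × ℝ} (hp : p ∈ Icc x0 x1 ×ˢ Icc y0 y1) (hq : q ∈ Icc x0 x1 ×ˢ Icc y0 y1) :
    |pdx g p - pdx g q| ≤ Mxx * (x1 - x0) + Mxy * (y1 - y0) := by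
  have hg1 : Differentiable ℝ (pdx g) :=
    (contDiff_pdx (n := 2) (by exact_mod_cast hg)).differentiable (by norm_num)
  have hMxx0 : 0 ≤ Mxx := (abs_nonneg _).trans (hMxx p hp)
  have hMxy0 : 0 ≤ Mxy := (abs_nonneg _).trans (hMxy p hp)
  have leg1 : |pdx g (p.1, p.2) - pdx g (q.1, p.2)| ≤ Mxx * (x1 - x0) := by
    have := abs_sub_le_of_deriv_le (g := fun t => pdx g (t, p.2))
      (g' := fun t => pdx (pdx g) (t, p.2)) (lo := x0) (hi := x1)
      (fun t _ => hasDerivAt_pdx t p.2 (hg1 _))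
      (fun t ht => hMxx (t, p.2) ⟨ht, hp.2⟩) hq.1 hp.1
    refine this.trans ?_
    have : |p.1 - q.1| ≤ x1 - x0 :=
      abs_sub_le_iff.2 ⟨by linarith [hp.1.1, hp.1.2, hq.1.1, hq.1.2],
        by linarith [hp.1.1, hp.1.2, hq.1.1, hq.1.2]⟩
    exact mul_le_mul_of_nonneg_left this hMxx0
  have leg2 : |pdx g (q.1, p.2) - pdx g (q.1, q.2)| ≤ Mxy * (y1 - y0) := by
    have hltd : ∀ t ∈ Icc y0 y1, HasDerivAt (fun sx => pdx g (q.1, sx))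
        (pdx (pdy g) (q.1, t)) t := by
      intro t _
      have := hasDerivAt_pdy q.1 t (f := pdx g) (hg1 _)
      rwa [show pdy (pdx g) (q.1, t) = pdx (pdy g) (q.1, t) from clairaut hg _] at this
    have := abs_sub_le_of_deriv_le (g := fun t => pdx g (q.1, t))
      (g' := fun t => pdx (pdy g) (q.1, t)) (lo := y0) (hi := y1)
      hltd (fun t ht => hMxy (q.1, t) ⟨hq.1, ht⟩) hq.2 hp.2
    refine this.trans ?_
    have : |p.2 - q.2| ≤ y1 - y0 :=
      abs_sub_le_iff.2 ⟨by linarith [hp.2.1, hp.2.2, hq.2.1, hq.2.2],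
        by linarith [hp.2.1, hp.2.2, hq.2.1, hq.2.2]⟩
    exact mul_le_mul_of_nonneg_left this hMxy0
  calc |pdx g p - pdx g q|
      = |(pdx g (p.1, p.2) - pdx g (q.1, p.2)) + (pdx g (q.1, p.2) - pdx g (q.1, q.2))| := by
        rw [Prod.mk.eta, Prod.mk.eta]; ring_nf
    _ ≤ |pdx g (p.1, p.2) - pdx g (q.1, p.2)| + |pdx g (q.1, p.2) - pdx g (q.1, q.2)| :=
        abs_add_le _ _
    _ ≤ Mxx * (x1 - x0) + Mxy * (y1 - y0) := add_le_add leg1 leg2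

/-- locate a non-node point in a uniform grid -/
lemma locate {a h t : ℝ} (hh : 0 < h) {n : ℕ} (h1 : a ≤ t) (h2 : t ≤ a + n * h)
    (hnot : ∀ m : ℕ, m ≤ n → t ≠ a + m * h) :
    ∃ m : ℕ, m < n ∧ a + m * h < t ∧ t < a + (m + 1) * h := by
  set z := (t - a) / h with hz
  have hz0 : 0 ≤ z := div_nonneg (by linarith) hh.le
  have hzn : z ≤ n := by rw [hz, div_le_iff₀ hh]; linarith
  set m := Nat.floor z with hm
  have hmz : (m : ℝ) ≤ z := Nat.floor_le hz0
  have hzm1 : z < m + 1 := Nat.lt_floor_add_one z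
  have hmn : m ≤ n := by
    exact_mod_cast Nat.floor_le_of_le hzn |>.trans (by simp)
  have key1 : a + m * h ≤ t := by
    have : (m : ℝ) * h ≤ z * h := mul_le_mul_of_nonneg_right hmz hh.le
    rw [hz] at this; rw [div_mul_cancel₀ _ hh.ne'] at this; linarith
  have key2 : t < a + (m + 1) * h := by
    have : z * h < (m + 1) * h := mul_lt_mul_of_pos_right hzm1 hh
    rw [hz, div_mul_cancel₀ _ hh.ne'] at this; push_cast; linarith
  have hne : t ≠ a + m * h := hnot m hmn
  have key1' : a + m * h < t := lt_of_le_of_ne key1 (fun he => hne he.symm)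
  have hmn' : m < n := by
    rcases lt_or_eq_of_le hmn with hlt | rfl
    · exact hlt
    · exact absurd (le_antisymm (by exact_mod_cast h2) key1) hne
  exact ⟨m, hmn', key1', key2⟩

lemma meshX_layer (M : ℕ) (hM : 0 < M) (lx : ℝ) (m : ℕ) (hm : m ≤ 3 * M) :
    meshX (6 * M) lx (3 * M + m) = (1 - lx) + m * (2 * lx / (6 * (M : ℝ))) := by
  have hM' : ((6 * M : ℕ) : ℝ) ≠ 0 := by positivity
  have hdiv : (6 * M) / 2 = 3 * M := by omega
  rcases Nat.eq_zero_or_pos m with rfl | hm0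
  · simp only [meshX, hdiv, Nat.add_zero, le_refl, if_pos]
    push_cast
    field_simp
    ring
  · rw [meshX, hdiv, if_neg (by omega)]
    push_cast
    field_simp
    ring

lemma meshY_layer (M : ℕ) (hM : 0 < M) (ly : ℝ) (m : ℕ) (hm : m ≤ 2 * M) :
    meshY (6 * M) ly (2 * M + m) = ly + m * ((1 - 2 * ly) / (2 * (M : ℝ))) := by
  have hdiv1 : (6 * M) / 3 = 2 * M := by omega
  have hdiv2 : (2 * (6 * M)) / 3 = 4 * M := by omega
  rcases Nat.eq_zero_or_pos m with rfl | hm0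
  · simp only [meshY, hdiv1, Nat.add_zero, le_refl, if_pos]
    push_cast
    field_simp
    ring
  · rw [meshY, hdiv1, if_neg (by omega), hdiv2, if_pos (by omega)]
    push_cast
    have h2M : ((M : ℝ)) ≠ 0 := by positivity
    field_simp
    ring

end Aux

set_option maxHeartbeats 2000000 in
/-- `‖∇(u − u^I)‖_{L^1(Ω₁)} ≤ C N⁻¹ ln N`, with the gradient of the piecewise bilinear
interpolant taken rectangle-by-rectangle. -/
theorem grad_interpolation_L1_Omega1 (β C0 : ℝ) (hβ : 0 < β) (hC0 : 0 < C0) :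
    ∃ C : ℝ, 0 < C ∧
      ∀ (N : ℕ) (ε lx ly : ℝ) (S E1 E2 E12 u uI : ℝ × ℝ → ℝ),
        ShishkinHyp N ε β lx ly →
        BoundS C0 S → BoundE1 ε β C0 E1 → BoundE2 ε C0 E2 → BoundE12 ε β C0 E12 →
        (∀ p : ℝ × ℝ, u p = S p + E1 p + E2 p + E12 p) →
        IsMeshInterpolant N lx ly u uI →
        ∫ p in Omega1R lx ly,
            (|pdx (fun q => u q - uI q) p| + |pdy (fun q => u q - uI q) p|)
          ≤ C * (N : ℝ)⁻¹ * Real.log (N : ℝ) := by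
  refine ⟨200 * C0 * (1/β + 1/β^2), by positivity, ?_⟩
  intro N ε lx ly S E1 E2 E12 u uI hSh hS hE1 hE2 hE12 hu hInt
  obtain ⟨hN0, hdvd, hε, hεN, -, hlxdef, hlydef, hlx2, hly4⟩ := hSh
  obtain ⟨M, rfl⟩ := hdvd
  have hM : 0 < M := by omega
  have hMR : (1:ℝ) ≤ (M:ℝ) := by exact_mod_cast hM
  set NR : ℝ := ((6 * M : ℕ) : ℝ) with hNRdef
  have hNR : NR = 6 * (M : ℝ) := by rw [hNRdef]; push_cast; ring
  have hNR6 : (6 : ℝ) ≤ NR := by rw [hNR]; linarith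
  have hNR0 : (0 : ℝ) < NR := by linarith
  set L : ℝ := Real.log NR with hLdef
  have hL1 : 1 ≤ L := by
    rw [hLdef, Real.le_log_iff_exp_le hNR0]
    have := Real.exp_one_lt_d9
    linarith
  have hL0 : 0 < L := lt_of_lt_of_le zero_lt_one hL1
  have hεNR : ε ≤ 1 / NR := by rw [one_div]; exact hεN
  have hε1 : ε ≤ 1 := by
    have : 1/NR ≤ 1 := by rw [div_le_one hNR0]; linarith
    linarith
  set s : ℝ := Real.sqrt ε with hsdef
  have hs0 : 0 < s := Real.sqrt_pos.2 hε
  have hs2 : s^2 = ε := Real.sq_sqrt hε.le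
  have hs1 : s ≤ 1 := by
    rw [hsdef, show (1:ℝ) = Real.sqrt 1 by simp]
    exact Real.sqrt_le_sqrt hε1
  have hlx0 : 0 < lx := by
    rw [hlxdef]; exact mul_pos (div_pos (by nlinarith) hβ) hL0
  have hly0 : 0 < ly := by
    rw [hlydef]; exact mul_pos (mul_pos (by norm_num) hs0) hL0
  set h : ℝ := 2 * lx / (6 * (M:ℝ)) with hhdef
  have hh0 : 0 < h := by
    rw [hhdef]; exact div_pos (by linarith) (by linarith)
  set k : ℝ := (1 - 2*ly) / (2 * (M:ℝ)) with hkdef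
  have h2ly : 2 * ly ≤ 1/2 := by linarith
  have hk0 : 0 < k := by
    rw [hkdef]; exact div_pos (by linarith) (by linarith)
  have hk3 : k ≤ 3 / NR := by
    rw [hkdef, hNR, div_le_div_iff₀ (by linarith) (by linarith)]
    nlinarith
  have hhval : h = 5 * ε * L / (β * NR) := by
    rw [hhdef, hlxdef, hNR]
    field_simp
    ring
  have hexp2 : β * h / ε ≤ 2 := by
    have hlog : L ≤ NR / Real.exp 1 := by
      have h1 : Real.log (NR / Real.exp 1) ≤ NR / Real.exp 1 - 1 :=
        Real.log_le_sub_one_of_pos (by positivity)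
      rw [Real.log_div (ne_of_gt hNR0) (Real.exp_ne_zero 1), Real.log_exp] at h1
      rw [hLdef]; linarith
    have hgt : (2.7:ℝ) < Real.exp 1 := by
      have := Real.exp_one_gt_d9; linarith
    have hexp1 : (0:ℝ) < Real.exp 1 := Real.exp_pos 1
    have e1 : β * h / ε = 5 * L / NR := by
      rw [hhval]; field_simp
    rw [e1]
    have e2 : 5 * L / NR ≤ 5 * (NR / Real.exp 1) / NR := by
      have : 5 * L ≤ 5 * (NR / Real.exp 1) := by linarith
      rw [div_eq_mul_inv, div_eq_mul_inv (5 * (NR / Real.exp 1))]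
      exact mul_le_mul_of_nonneg_right this (by positivity)
    have e3 : 5 * (NR / Real.exp 1) / NR = 5 / Real.exp 1 := by
      field_simp
    rw [e3] at e2
    have e4 : 5 / Real.exp 1 ≤ 2 := by
      rw [div_le_iff₀ hexp1]; nlinarith
    linarith
  have hexp8 : Real.exp (β * h / ε) ≤ 8 := by
    have e1 : Real.exp (β*h/ε) ≤ Real.exp 2 := Real.exp_le_exp.2 hexp2
    have e2 : Real.exp 2 = Real.exp 1 * Real.exp 1 := by
      rw [← Real.exp_add]; norm_num
    have := Real.exp_one_lt_d9
    nlinarith [Real.exp_pos 1]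
  have hexpL : Real.exp (-(2.5 * L)) ≤ 1/NR := by
    have h1 : Real.exp (-(2.5*L)) ≤ Real.exp (-L) := Real.exp_le_exp.2 (by linarith)
    have h2 : Real.exp (-L) = 1/NR := by
      rw [Real.exp_neg, hLdef, Real.exp_log hNR0, one_div]
    rw [h2] at h1; exact h1
  -- smoothness
  have hueq : u = fun p => S p + E1 p + E2 p + E12 p := funext hu
  have hSd : Differentiable ℝ S := hS.1.differentiable (by norm_num)
  have hE1d : Differentiable ℝ E1 := hE1.1.differentiable (by norm_num)
  have hE2d : Differentiable ℝ E2 := hE2.1.differentiable (by norm_num)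
  have hE12d : Differentiable ℝ E12 := hE12.1.differentiable (by norm_num)
  have hu3 : ContDiff ℝ 3 u := by
    rw [hueq]; exact ((hS.1.add hE1.1).add hE2.1).add hE12.1
  have hud : Differentiable ℝ u := hu3.differentiable (by norm_num)
  -- cleaned derivative bounds
  have hrp : ∀ (i : ℕ), ε ^ (-(i:ℝ)) = (ε^i)⁻¹ := by
    intro i; rw [Real.rpow_neg hε.le, Real.rpow_natCast]
  have hrphalf : ε ^ (-((1:ℕ):ℝ)/2) = s⁻¹ := by
    rw [show (-((1:ℕ):ℝ)/2) = -(1/2 : ℝ) by norm_num, Real.rpow_neg hε.le, hsdef,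
      Real.sqrt_eq_rpow]
  have bS_x : ∀ q ∈ UnitSq, |pdx S q| ≤ C0 := fun q hq => hS.2 1 0 (by norm_num) q hq
  have bS_y : ∀ q ∈ UnitSq, |pdy S q| ≤ C0 := fun q hq => hS.2 0 1 (by norm_num) q hq
  have bE1x : ∀ q ∈ UnitSq, |pdx E1 q| ≤ C0 * ε⁻¹ * Real.exp (-β*(1-q.1)/ε) := by
    intro q hq
    have h0 := hE1.2 1 0 (by norm_num) q hq
    rwa [hrp 1, pow_one] at h0
  have bE1y : ∀ q ∈ UnitSq, |pdy E1 q| ≤ C0 * Real.exp (-β*(1-q.1)/ε) := by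
    intro q hq
    have h0 := hE1.2 0 1 (by norm_num) q hq
    rwa [hrp 0, pow_zero, inv_one, mul_one] at h0
  have bE1xx : ∀ q ∈ UnitSq, |pdx (pdx E1) q| ≤ C0 * (ε^2)⁻¹ * Real.exp (-β*(1-q.1)/ε) := by
    intro q hq
    have h0 := hE1.2 2 0 (by norm_num) q hq
    rwa [hrp 2] at h0
  have bE1xy : ∀ q ∈ UnitSq, |pdx (pdy E1) q| ≤ C0 * ε⁻¹ * Real.exp (-β*(1-q.1)/ε) := by
    intro q hq
    have h0 := hE1.2 1 1 (by norm_num) q hq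
    rwa [hrp 1, pow_one] at h0
  have bE2x : ∀ q ∈ UnitSq, |pdx E2 q|
      ≤ C0 * (Real.exp (-q.2/s) + Real.exp (-(1-q.2)/s)) := by
    intro q hq
    have h0 := hE2.2 1 0 (by norm_num) q hq
    rwa [show (-((0:ℕ):ℝ)/2) = (0:ℝ) by norm_num, Real.rpow_zero, mul_one] at h0
  have bE2y : ∀ q ∈ UnitSq, |pdy E2 q|
      ≤ C0 * s⁻¹ * (Real.exp (-q.2/s) + Real.exp (-(1-q.2)/s)) := by
    intro q hq
    have h0 := hE2.2 0 1 (by norm_num) q hq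
    rwa [hrphalf] at h0
  have bE12x : ∀ q ∈ UnitSq, |pdx E12 q|
      ≤ C0 * ε⁻¹ * Real.exp (-β*(1-q.1)/ε) * (Real.exp (-q.2/s) + Real.exp (-(1-q.2)/s)) := by
    intro q hq
    have h0 := hE12.2 1 0 (by norm_num) q hq
    rwa [show (-(((1:ℕ):ℝ) + ((0:ℕ):ℝ)/2)) = -((1:ℕ):ℝ) by norm_num, hrp 1, pow_one] at h0
  have bE12y : ∀ q ∈ UnitSq, |pdy E12 q|
      ≤ C0 * s⁻¹ * Real.exp (-β*(1-q.1)/ε) * (Real.exp (-q.2/s) + Real.exp (-(1-q.2)/s)) := by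
    intro q hq
    have h0 := hE12.2 0 1 (by norm_num) q hq
    rwa [show (-(((0:ℕ):ℝ) + ((1:ℕ):ℝ)/2)) = -((1:ℕ):ℝ)/2 by norm_num, hrphalf] at h0
  have habs : ∀ x y : ℝ, |x - y| ≤ |x| + |y| := fun x y => abs_sub _ _
  -- constants
  set A : ℝ := C0 * (4 + 4/NR + 4/(s*NR)) with hAdef
  set B : ℝ := C0 * (8*h/ε^2 + 8*k/ε + 32/(ε*NR) + 16 + 32/(s*NR)) with hBdef
  have hA0 : 0 ≤ A := by
    rw [hAdef]
    have t1 : 0 ≤ 4/NR := le_of_lt (div_pos (by norm_num) hNR0)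
    have t2 : 0 ≤ 4/(s*NR) := le_of_lt (div_pos (by norm_num) (mul_pos hs0 hNR0))
    nlinarith
  have hB0 : 0 ≤ B := by
    rw [hBdef]
    have t1 : 0 ≤ 8*h/ε^2 := le_of_lt (div_pos (by linarith) (by positivity))
    have t2 : 0 ≤ 8*k/ε := le_of_lt (div_pos (by linarith) hε)
    have t3 : 0 ≤ 32/(ε*NR) := le_of_lt (div_pos (by norm_num) (mul_pos hε hNR0))
    have t4 : 0 ≤ 32/(s*NR) := le_of_lt (div_pos (by norm_num) (mul_pos hs0 hNR0))
    nlinarith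
  set D : ℝ × ℝ → ℝ := fun q => u q - uI q with hDdef
  -- THE POINTWISE BOUND
  have hpt : ∀ p ∈ Omega1R lx ly,
      (∀ m : ℕ, p.1 ≠ meshX (6*M) lx m) → (∀ m : ℕ, p.2 ≠ meshY (6*M) ly m) →
      |pdx D p| + |pdy D p| ≤ A + B * Real.exp (-β * (1 - p.1) / ε) := by
    rintro p ⟨hpx, hpy⟩ hnx hny
    -- locate the mesh rectangle containing p
    have hxnodes : ∀ m : ℕ, m ≤ 3*M → p.1 ≠ (1 - lx) + m * h := by
      intro m hm he
      exact hnx (3*M + m) (by rw [meshX_layer M hM lx m hm, ← hhdef]; exact he)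
    have hend : (1 - lx) + ((3*M:ℕ):ℝ) * h = 1 := by
      rw [hhdef]; push_cast; field_simp; ring
    obtain ⟨mx, hmx3, hx0lt, hx1lt⟩ :=
      locate hh0 (n := 3*M) hpx.1 (by rw [hend]; exact hpx.2) hxnodes
    have hynodes : ∀ m : ℕ, m ≤ 2*M → p.2 ≠ ly + m * k := by
      intro m hm he
      exact hny (2*M + m) (by rw [meshY_layer M hM ly m hm, ← hkdef]; exact he)
    have hendy : ly + ((2*M:ℕ):ℝ) * k = 1 - ly := by
      rw [hkdef]; push_cast; field_simp; ring
    obtain ⟨my, hmy2, hy0lt, hy1lt⟩ :=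
      locate hk0 (n := 2*M) hpy.1 (by rw [hendy]; exact hpy.2) hynodes
    set x0 : ℝ := (1 - lx) + (mx:ℝ) * h with hx0def
    set x1 : ℝ := (1 - lx) + ((mx:ℝ) + 1) * h with hx1def
    set y0 : ℝ := ly + (my:ℝ) * k with hy0def
    set y1 : ℝ := ly + ((my:ℝ) + 1) * k with hy1def
    have hxw : x1 - x0 = h := by rw [hx1def, hx0def]; ring
    have hyw : y1 - y0 = k := by rw [hy1def, hy0def]; ring
    have hx01 : x0 < x1 := by linarith only [hxw, hh0]
    have hy01 : y0 < y1 := by linarith only [hyw, hk0]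
    have hpIn : p ∈ Ioo x0 x1 ×ˢ Ioo y0 y1 := ⟨⟨hx0lt, hx1lt⟩, ⟨hy0lt, hy1lt⟩⟩
    have hpR : p ∈ Icc x0 x1 ×ˢ Icc y0 y1 := ⟨⟨hx0lt.le, hx1lt.le⟩, ⟨hy0lt.le, hy1lt.le⟩⟩
    have ex0 : meshX (6*M) lx (3*M + mx) = x0 := by
      rw [meshX_layer M hM lx mx hmx3.le, ← hhdef, hx0def]
    have ex1 : meshX (6*M) lx (3*M + mx + 1) = x1 := by
      rw [show 3*M + mx + 1 = 3*M + (mx+1) from by omega,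
        meshX_layer M hM lx (mx+1) hmx3, ← hhdef, hx1def]
      push_cast; ring
    have ey0 : meshY (6*M) ly (2*M + my) = y0 := by
      rw [meshY_layer M hM ly my hmy2.le, ← hkdef, hy0def]
    have ey1 : meshY (6*M) ly (2*M + my + 1) = y1 := by
      rw [show 2*M + my + 1 = 2*M + (my+1) from by omega,
        meshY_layer M hM ly (my+1) hmy2, ← hkdef, hy1def]
      push_cast; ring
    have hbil : IsBilinearOn uI (Icc x0 x1 ×ˢ Icc y0 y1) := by
      have hb := hInt.2.1 (3*M+mx+1) (2*M+my+1) (by omega) (by omega) (by omega) (by omega)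
      simp only [meshRect] at hb
      rwa [show 3*M+mx+1-1 = 3*M+mx from by omega,
        show 2*M+my+1-1 = 2*M+my from by omega, ex0, ex1, ey0, ey1] at hb
    have hc00 : uI (x0, y0) = u (x0, y0) := by
      have hc := hInt.2.2 (3*M+mx) (2*M+my) (by omega) (by omega)
      rwa [ex0, ey0] at hc
    have hc10 : uI (x1, y0) = u (x1, y0) := by
      have hc := hInt.2.2 (3*M+mx+1) (2*M+my) (by omega) (by omega)
      rwa [ex1, ey0] at hc
    have hc01 : uI (x0, y1) = u (x0, y1) := by
      have hc := hInt.2.2 (3*M+mx) (2*M+my+1) (by omega) (by omega)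
      rwa [ex0, ey1] at hc
    have hc11 : uI (x1, y1) = u (x1, y1) := by
      have hc := hInt.2.2 (3*M+mx+1) (2*M+my+1) (by omega) (by omega)
      rwa [ex1, ey1] at hc
    -- geometry of the rectangle
    have hmxR : (mx:ℝ) + 1 ≤ 3*(M:ℝ) := by exact_mod_cast hmx3
    have hmyR : (my:ℝ) + 1 ≤ 2*(M:ℝ) := by exact_mod_cast hmy2
    have h3Mh : 3*(M:ℝ) * h = lx := by rw [hhdef]; field_simp; ring
    have h2Mk : 2*(M:ℝ) * k = 1 - 2*ly := by rw [hkdef]; field_simp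
    have hx1le : x1 ≤ 1 := by
      rw [hx1def]
      have : ((mx:ℝ)+1)*h ≤ 3*(M:ℝ)*h := mul_le_mul_of_nonneg_right hmxR hh0.le
      linarith only [this, h3Mh]
    have hx0ge : 1 - lx ≤ x0 := by
      rw [hx0def]
      have : 0 ≤ (mx:ℝ)*h := mul_nonneg (Nat.cast_nonneg mx) hh0.le
      linarith only [this]
    have hy0ge : ly ≤ y0 := by
      rw [hy0def]
      have : 0 ≤ (my:ℝ)*k := mul_nonneg (Nat.cast_nonneg my) hk0.le
      linarith only [this]
    have hy1le : y1 ≤ 1 - ly := by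
      rw [hy1def]
      have : ((my:ℝ)+1)*k ≤ 2*(M:ℝ)*k := mul_le_mul_of_nonneg_right hmyR hk0.le
      linarith only [this, h2Mk]
    have hRsub : Icc x0 x1 ×ˢ Icc y0 y1 ⊆ UnitSq := by
      rintro q ⟨hq1, hq2⟩
      exact ⟨⟨by linarith only [hq1.1, hx0ge, hlx2], by linarith only [hq1.2, hx1le]⟩,
             ⟨by linarith only [hq2.1, hy0ge, hly0], by linarith only [hq2.2, hy1le, hly0]⟩⟩
    -- exponential bounds on the rectangle
    set P : ℝ := Real.exp (-β * (1 - p.1) / ε) with hPdef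
    have hP0 : 0 < P := Real.exp_pos _
    have hEx8 : ∀ q ∈ Icc x0 x1 ×ˢ Icc y0 y1, Real.exp (-β*(1-q.1)/ε) ≤ 8 * P := by
      rintro q ⟨hq1, -⟩
      have hq1p : q.1 ≤ p.1 + h := by linarith only [hq1.2, hxw, hx0lt]
      have hnum : -β*(1-q.1)/ε ≤ -β * (1 - p.1) / ε + β*h/ε := by
        have hstep : -β*(1-q.1) ≤ -β*(1-p.1) + β*h := by
          have expand : -β*(1-p.1) + β*h - (-β*(1-q.1)) = β*(p.1 + h - q.1) := by ring
          have pos : (0:ℝ) ≤ β*(p.1 + h - q.1) :=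
            mul_nonneg hβ.le (by linarith only [hq1p])
          linarith only [expand, pos]
        calc -β*(1-q.1)/ε ≤ (-β*(1-p.1) + β*h)/ε := by
              rw [div_eq_mul_inv, div_eq_mul_inv]
              exact mul_le_mul_of_nonneg_right hstep (by positivity)
          _ = -β * (1 - p.1) / ε + β*h/ε := by rw [add_div]
      calc Real.exp (-β*(1-q.1)/ε) ≤ Real.exp (-β * (1 - p.1) / ε + β*h/ε) :=
            Real.exp_le_exp.2 hnum
        _ = P * Real.exp (β*h/ε) := by rw [Real.exp_add, hPdef]
        _ ≤ P * 8 := mul_le_mul_of_nonneg_left hexp8 hP0.le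
        _ = 8 * P := mul_comm _ _
    have hEy2 : ∀ q ∈ Icc x0 x1 ×ˢ Icc y0 y1,
        Real.exp (-q.2/s) + Real.exp (-(1-q.2)/s) ≤ 2/NR := by
      rintro q ⟨-, hq2⟩
      have hlys : ly / s = 2.5 * L := by rw [hlydef]; field_simp
      have e1 : Real.exp (-q.2/s) ≤ 1/NR := by
        have hq : ly ≤ q.2 := le_trans hy0ge hq2.1
        have hle : -q.2/s ≤ -(2.5*L) := by
          calc -q.2/s ≤ -ly/s := by
                rw [div_eq_mul_inv, div_eq_mul_inv]
                exact mul_le_mul_of_nonneg_right (by linarith only [hq]) (by positivity)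
            _ = -(ly/s) := by ring
            _ = -(2.5*L) := by rw [hlys]
        exact le_trans (Real.exp_le_exp.2 hle) hexpL
      have e2 : Real.exp (-(1-q.2)/s) ≤ 1/NR := by
        have hq : ly ≤ 1 - q.2 := by linarith only [hq2.2, hy1le]
        have hle : -(1-q.2)/s ≤ -(2.5*L) := by
          calc -(1-q.2)/s ≤ -ly/s := by
                rw [div_eq_mul_inv, div_eq_mul_inv]
                exact mul_le_mul_of_nonneg_right (by linarith only [hq]) (by positivity)
            _ = -(ly/s) := by ring
            _ = -(2.5*L) := by rw [hlys]
        exact le_trans (Real.exp_le_exp.2 hle) hexpL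
      have : 1/NR + 1/NR = 2/NR := by ring
      linarith only [e1, e2, this]
    -- derivative decompositions
    have hpdxu : ∀ r, pdx u r = pdx S r + pdx E1 r + pdx E2 r + pdx E12 r := by
      intro r; rw [hueq]; exact pdx_add4 hSd hE1d hE2d hE12d r
    have hpdyu : ∀ r, pdy u r = pdy S r + pdy E1 r + pdy E2 r + pdy E12 r := by
      intro r; rw [hueq]; exact pdy_add4 hSd hE1d hE2d hE12d r
    -- oscillation of pdx E1
    have hoscE1 : ∀ q ∈ Icc x0 x1 ×ˢ Icc y0 y1,
        |pdx E1 p - pdx E1 q| ≤ 8*C0*P/ε^2 * h + 8*C0*P/ε * k := by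
      intro q hq
      have bxx : ∀ r ∈ Icc x0 x1 ×ˢ Icc y0 y1, |pdx (pdx E1) r| ≤ 8*C0*P/ε^2 := by
        intro r hr
        calc |pdx (pdx E1) r| ≤ C0 * (ε^2)⁻¹ * Real.exp (-β*(1-r.1)/ε) := bE1xx r (hRsub hr)
          _ ≤ C0 * (ε^2)⁻¹ * (8*P) :=
              mul_le_mul_of_nonneg_left (hEx8 r hr) (mul_nonneg hC0.le (by positivity))
          _ = 8*C0*P/ε^2 := by field_simp
      have bxy : ∀ r ∈ Icc x0 x1 ×ˢ Icc y0 y1, |pdx (pdy E1) r| ≤ 8*C0*P/ε := by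
        intro r hr
        calc |pdx (pdy E1) r| ≤ C0 * ε⁻¹ * Real.exp (-β*(1-r.1)/ε) := bE1xy r (hRsub hr)
          _ ≤ C0 * ε⁻¹ * (8*P) :=
              mul_le_mul_of_nonneg_left (hEx8 r hr) (mul_nonneg hC0.le (by positivity))
          _ = 8*C0*P/ε := by field_simp
      have hosc := pdx_osc hE1.1 bxx bxy hpR hq
      rwa [hxw, hyw] at hosc
    -- total oscillation of pdx u
    have hXdiff : ∀ q ∈ Icc x0 x1 ×ˢ Icc y0 y1, |pdx u p - pdx u q| ≤
        2*C0 + (8*C0*P/ε^2 * h + 8*C0*P/ε * k) + 2*(C0*(2/NR))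
          + 2*(C0 * ε⁻¹ * (8*P) * (2/NR)) := by
      intro q hq
      have hqU := hRsub hq
      have hpU := hRsub hpR
      have t1 : |pdx S p - pdx S q| ≤ 2*C0 := by
        have a1 := bS_x p hpU; have a2 := bS_x q hqU
        have := habs (pdx S p) (pdx S q); linarith only [this, a1, a2]
      have t2 := hoscE1 q hq
      have hEx2 : ∀ r ∈ Icc x0 x1 ×ˢ Icc y0 y1, |pdx E2 r| ≤ C0*(2/NR) := by
        intro r hr
        calc |pdx E2 r| ≤ C0 * (Real.exp (-r.2/s) + Real.exp (-(1-r.2)/s)) :=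
              bE2x r (hRsub hr)
          _ ≤ C0 * (2/NR) := mul_le_mul_of_nonneg_left (hEy2 r hr) hC0.le
      have t3 : |pdx E2 p - pdx E2 q| ≤ 2*(C0*(2/NR)) := by
        have a1 := hEx2 p hpR; have a2 := hEx2 q hq
        have := habs (pdx E2 p) (pdx E2 q); linarith only [this, a1, a2]
      have hEx12 : ∀ r ∈ Icc x0 x1 ×ˢ Icc y0 y1,
          |pdx E12 r| ≤ C0 * ε⁻¹ * (8*P) * (2/NR) := by
        intro r hr
        calc |pdx E12 r| ≤ C0 * ε⁻¹ * Real.exp (-β*(1-r.1)/ε)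
              * (Real.exp (-r.2/s) + Real.exp (-(1-r.2)/s)) := bE12x r (hRsub hr)
          _ ≤ C0 * ε⁻¹ * (8*P) * (Real.exp (-r.2/s) + Real.exp (-(1-r.2)/s)) := by
              apply mul_le_mul_of_nonneg_right _ (by positivity)
              exact mul_le_mul_of_nonneg_left (hEx8 r hr) (mul_nonneg hC0.le (by positivity))
          _ ≤ C0 * ε⁻¹ * (8*P) * (2/NR) := by
              apply mul_le_mul_of_nonneg_left (hEy2 r hr)
              have : (0:ℝ) ≤ C0 * ε⁻¹ := mul_nonneg hC0.le (by positivity)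
              positivity
      have t4 : |pdx E12 p - pdx E12 q| ≤ 2*(C0 * ε⁻¹ * (8*P) * (2/NR)) := by
        have a1 := hEx12 p hpR; have a2 := hEx12 q hq
        have := habs (pdx E12 p) (pdx E12 q); linarith only [this, a1, a2]
      rw [hpdxu p, hpdxu q]
      have e : pdx S p + pdx E1 p + pdx E2 p + pdx E12 p
            - (pdx S q + pdx E1 q + pdx E2 q + pdx E12 q)
          = (pdx S p - pdx S q) + (pdx E1 p - pdx E1 q) + (pdx E2 p - pdx E2 q)
            + (pdx E12 p - pdx E12 q) := by ring
      rw [e]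
      have tsum := le_trans (abs_add_le _ (pdx E12 p - pdx E12 q))
        (add_le_add (le_trans (abs_add_le _ (pdx E2 p - pdx E2 q))
          (add_le_add (abs_add_le (pdx S p - pdx S q) (pdx E1 p - pdx E1 q)) le_rfl)) le_rfl)
      linarith only [tsum, t1, t2, t3, t4]
    -- x-part conclusion
    obtain ⟨qa, hqa, qb, hqb, hminx, hmaxx⟩ :=
      interp_pdx hx01 hy01 hud hbil hc00 hc10 hc01 hc11 hpIn
    have hDx : |pdx D p| ≤ 2*C0 + (8*C0*P/ε^2 * h + 8*C0*P/ε * k) + 2*(C0*(2/NR))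
        + 2*(C0 * ε⁻¹ * (8*P) * (2/NR)) := by
      have hsplit : pdx D p = pdx u p - pdx uI p := by
        rw [hDdef]; exact pdx_sub (hud p) (bilin_differentiableAt hbil hpIn)
      rw [hsplit]
      exact (abs_sub_le_max_of_between hminx hmaxx).trans
        (max_le (hXdiff qa hqa) (hXdiff qb hqb))
    -- y-part
    set My : ℝ := C0*(1 + 8*P + 2/(s*NR) + 8*P*(2/(s*NR))) with hMydef
    have hMyb : ∀ q ∈ Icc x0 x1 ×ˢ Icc y0 y1, |pdy u q| ≤ My := by
      intro q hq
      have hqU := hRsub hq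
      have a1 := bS_y q hqU
      have a2 : |pdy E1 q| ≤ C0*(8*P) := by
        calc |pdy E1 q| ≤ C0 * Real.exp (-β*(1-q.1)/ε) := bE1y q hqU
          _ ≤ C0*(8*P) := mul_le_mul_of_nonneg_left (hEx8 q hq) hC0.le
      have a3 : |pdy E2 q| ≤ C0*(2/(s*NR)) := by
        calc |pdy E2 q| ≤ C0 * s⁻¹ * (Real.exp (-q.2/s) + Real.exp (-(1-q.2)/s)) :=
              bE2y q hqU
          _ ≤ C0 * s⁻¹ * (2/NR) :=
              mul_le_mul_of_nonneg_left (hEy2 q hq) (mul_nonneg hC0.le (by positivity))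
          _ = C0*(2/(s*NR)) := by
              rw [div_eq_mul_inv, div_eq_mul_inv, mul_inv]; ring
      have a4 : |pdy E12 q| ≤ C0*(8*P*(2/(s*NR))) := by
        calc |pdy E12 q| ≤ C0 * s⁻¹ * Real.exp (-β*(1-q.1)/ε)
              * (Real.exp (-q.2/s) + Real.exp (-(1-q.2)/s)) := bE12y q hqU
          _ ≤ C0 * s⁻¹ * (8*P) * (Real.exp (-q.2/s) + Real.exp (-(1-q.2)/s)) := by
              apply mul_le_mul_of_nonneg_right _ (by positivity)
              exact mul_le_mul_of_nonneg_left (hEx8 q hq) (mul_nonneg hC0.le (by positivity))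
          _ ≤ C0 * s⁻¹ * (8*P) * (2/NR) := by
              apply mul_le_mul_of_nonneg_left (hEy2 q hq)
              have h1 : (0:ℝ) ≤ s⁻¹ := by positivity
              have h2 : (0:ℝ) ≤ 8*P := by positivity
              exact mul_nonneg (mul_nonneg hC0.le h1) h2
          _ = C0*(8*P*(2/(s*NR))) := by
              field_simp
      rw [hpdyu q]
      have tsum := le_trans (abs_add_le _ (pdy E12 q))
        (add_le_add (le_trans (abs_add_le _ (pdy E2 q))
          (add_le_add (abs_add_le (pdy S q) (pdy E1 q)) le_rfl)) le_rfl)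
      have hMyexp : My = C0 + C0*(8*P) + C0*(2/(s*NR)) + C0*(8*P*(2/(s*NR))) := by
        rw [hMydef]; ring
      linarith only [tsum, a1, a2, a3, a4, hMyexp]
    obtain ⟨qc, hqc, qd, hqd, hminy, hmaxy⟩ :=
      interp_pdy hx01 hy01 hud hbil hc00 hc10 hc01 hc11 hpIn
    have hDy : |pdy D p| ≤ 2 * My := by
      have hsplit : pdy D p = pdy u p - pdy uI p := by
        rw [hDdef]; exact pdy_sub (hud p) (bilin_differentiableAt hbil hpIn)
      have h1 : |pdy u p| ≤ My := hMyb p hpR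
      have h2 : |pdy uI p| ≤ My := by
        rw [abs_le]
        constructor
        · exact le_trans (le_min (abs_le.1 (hMyb qc hqc)).1 (abs_le.1 (hMyb qd hqd)).1) hminy
        · exact le_trans hmaxy (max_le (le_trans (le_abs_self _) (hMyb qc hqc))
            (le_trans (le_abs_self _) (hMyb qd hqd)))
      rw [hsplit]
      have := habs (pdy u p) (pdy uI p); linarith only [this, h1, h2]
    -- total
    have hfinal : (2*C0 + (8*C0*P/ε^2 * h + 8*C0*P/ε * k) + 2*(C0*(2/NR))
        + 2*(C0 * ε⁻¹ * (8*P) * (2/NR))) + 2 * My = A + B * P := by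
      rw [hMydef, hAdef, hBdef]
      field_simp
      ring
    calc |pdx D p| + |pdy D p|
        ≤ (2*C0 + (8*C0*P/ε^2 * h + 8*C0*P/ε * k) + 2*(C0*(2/NR))
            + 2*(C0 * ε⁻¹ * (8*P) * (2/NR))) + 2 * My := add_le_add hDx hDy
      _ = A + B * P := hfinal
  -- majorant function
  set G : ℝ × ℝ → ℝ := fun q => A + B * Real.exp (-β * (1 - q.1) / ε) with hGdef
  have hGc : Continuous G := by
    rw [hGdef]
    exact continuous_const.add (continuous_const.mul
      (Real.continuous_exp.comp (by fun_prop)))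
  have hOm : Omega1R lx ly = Icc (1-lx) 1 ×ˢ Icc ly (1-ly) := rfl
  have hcomp : IsCompact (Omega1R lx ly) := by
    rw [hOm]; exact isCompact_Icc.prod isCompact_Icc
  have hmeasOm : MeasurableSet (Omega1R lx ly) := by
    rw [hOm]; exact measurableSet_Icc.prod measurableSet_Icc
  have hGint : IntegrableOn G (Omega1R lx ly) := hGc.continuousOn.integrableOn_compact hcomp
  -- the grid lines are a null set
  have hZ : volume {q : ℝ × ℝ | ∃ m : ℕ,
      q.1 = meshX (6*M) lx m ∨ q.2 = meshY (6*M) ly m} = 0 := by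
    have hsub : {q : ℝ × ℝ | ∃ m : ℕ, q.1 = meshX (6*M) lx m ∨ q.2 = meshY (6*M) ly m}
        ⊆ ⋃ m : ℕ, (({meshX (6*M) lx m} : Set ℝ) ×ˢ (univ : Set ℝ)
            ∪ (univ : Set ℝ) ×ˢ ({meshY (6*M) ly m} : Set ℝ)) := by
      rintro q ⟨m, hm | hm⟩
      · exact mem_iUnion.2 ⟨m, Or.inl ⟨hm, mem_univ _⟩⟩
      · exact mem_iUnion.2 ⟨m, Or.inr ⟨mem_univ _, hm⟩⟩
    refine measure_mono_null hsub (measure_iUnion_null fun m => measure_union_null ?_ ?_)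
    · rw [Measure.volume_eq_prod, Measure.prod_prod, Real.volume_singleton, zero_mul]
    · rw [Measure.volume_eq_prod, Measure.prod_prod, Real.volume_singleton, mul_zero]
  have haeZ : ∀ᵐ q : ℝ × ℝ, ¬ (∃ m : ℕ,
      q.1 = meshX (6*M) lx m ∨ q.2 = meshY (6*M) ly m) :=
    measure_eq_zero_iff_ae_notMem.mp hZ
  have hfae : ∀ᵐ q ∂(volume.restrict (Omega1R lx ly)),
      |pdx D q| + |pdy D q| ≤ G q := by
    filter_upwards [ae_restrict_mem hmeasOm, ae_restrict_of_ae haeZ] with q hq1 hq2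
    exact hpt q hq1 (fun m hm => hq2 ⟨m, Or.inl hm⟩) (fun m hm => hq2 ⟨m, Or.inr hm⟩)
  have hfmeas : AEStronglyMeasurable (fun q : ℝ × ℝ => |pdx D q| + |pdy D q|)
      (volume.restrict (Omega1R lx ly)) := by
    apply Measurable.aestronglyMeasurable
    exact ((measurable_fderiv_apply_const ℝ D ((1:ℝ),(0:ℝ))).abs.add
      (measurable_fderiv_apply_const ℝ D ((0:ℝ),(1:ℝ))).abs)
  have hfint : IntegrableOn (fun q : ℝ × ℝ => |pdx D q| + |pdy D q|) (Omega1R lx ly) := by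
    apply Integrable.mono' hGint hfmeas
    filter_upwards [hfae] with q hq
    rw [Real.norm_eq_abs, abs_of_nonneg (by positivity)]
    exact hq
  have step1 : ∫ q in Omega1R lx ly, (|pdx D q| + |pdy D q|)
      ≤ ∫ q in Omega1R lx ly, G q := integral_mono_ae hfint hGint hfae
  -- computing the integral of the majorant
  have hIy : ∫ _ in Icc ly (1-ly), (1:ℝ) = 1 - 2*ly := by
    rw [setIntegral_const, smul_eq_mul, mul_one, measureReal_def, Real.volume_Icc,
      ENNReal.toReal_ofReal (by linarith : (0:ℝ) ≤ 1 - ly - ly)]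
    ring
  have hIx : ∫ x in Icc (1-lx) 1, Real.exp (-β*(1-x)/ε)
      = ε/β * (1 - Real.exp (-β*lx/ε)) := by
    rw [MeasureTheory.integral_Icc_eq_integral_Ioc,
      ← intervalIntegral.integral_of_le (by linarith : 1-lx ≤ 1)]
    have hderiv : ∀ x ∈ uIcc (1-lx) (1:ℝ),
        HasDerivAt (fun t => ε/β * Real.exp (-β*(1-t)/ε)) (Real.exp (-β*(1-x)/ε)) x := by
      intro x _
      have h1 : HasDerivAt (fun t : ℝ => -β*(1-t)/ε) (β/ε) x := by
        have heq : (fun t : ℝ => -β*(1-t)/ε) = fun t => (β/ε)*t + (-β/ε) := by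
          funext t; field_simp; ring
        rw [heq]
        simpa using ((hasDerivAt_id x).const_mul (β/ε)).add_const (-β/ε)
      have h2 := (h1.exp).const_mul (ε/β)
      exact h2.congr_deriv (by
        rw [mul_comm (Real.exp _), ← mul_assoc, div_mul_div_comm, mul_comm ε β,
          div_self (by positivity), one_mul])
    rw [intervalIntegral.integral_eq_sub_of_hasDerivAt hderiv
      ((Real.continuous_exp.comp (by fun_prop)).intervalIntegrable _ _)]
    norm_num
    ring
  have hrestr : (volume : Measure (ℝ × ℝ)).restrict (Icc (1-lx) 1 ×ˢ Icc ly (1-ly))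
      = ((volume : Measure ℝ).restrict (Icc (1-lx) 1)).prod
        ((volume : Measure ℝ).restrict (Icc ly (1-ly))) := by
    rw [Measure.volume_eq_prod, Measure.prod_restrict]
  have hprod : ∫ q in Omega1R lx ly, Real.exp (-β*(1-q.1)/ε)
      = (∫ x in Icc (1-lx) 1, Real.exp (-β*(1-x)/ε)) * (1 - 2*ly) := by
    rw [hOm, hrestr, ← hIy]
    calc ∫ q, Real.exp (-β*(1-q.1)/ε)
          ∂(((volume : Measure ℝ).restrict (Icc (1-lx) 1)).prod
            ((volume : Measure ℝ).restrict (Icc ly (1-ly))))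
        = ∫ q, (fun x => Real.exp (-β*(1-x)/ε)) q.1 * (fun _ : ℝ => (1:ℝ)) q.2
          ∂(((volume : Measure ℝ).restrict (Icc (1-lx) 1)).prod
            ((volume : Measure ℝ).restrict (Icc ly (1-ly)))) := by simp
      _ = (∫ x in Icc (1-lx) 1, Real.exp (-β*(1-x)/ε)) * (∫ _ in Icc ly (1-ly), (1:ℝ)) :=
          MeasureTheory.integral_prod_mul (μ := volume.restrict (Icc (1-lx) 1))
            (ν := volume.restrict (Icc ly (1-ly)))
            (f := fun x => Real.exp (-β*(1-x)/ε)) (g := fun _ => (1:ℝ))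
  have hvol : (volume (Omega1R lx ly)).toReal = lx * (1 - 2*ly) := by
    rw [hOm, Measure.volume_eq_prod, Measure.prod_prod, Real.volume_Icc,
      Real.volume_Icc, ← ENNReal.ofReal_mul (by linarith : (0:ℝ) ≤ 1 - (1-lx)),
      ENNReal.toReal_ofReal (mul_nonneg (by linarith only [hlx0] : (0:ℝ) ≤ 1 - (1-lx))
        (by linarith only [h2ly] : (0:ℝ) ≤ 1 - ly - ly))]
    ring
  have hBexp_int : IntegrableOn (fun q : ℝ × ℝ => B * Real.exp (-β*(1-q.1)/ε))
      (Omega1R lx ly) :=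
    ((continuous_const.mul (Real.continuous_exp.comp
      (by fun_prop))).continuousOn).integrableOn_compact hcomp
  have hsplitG : ∫ q in Omega1R lx ly, G q
      = A * (lx * (1-2*ly))
        + B * ((∫ x in Icc (1-lx) 1, Real.exp (-β*(1-x)/ε)) * (1-2*ly)) := by
    have e0 : ∫ q in Omega1R lx ly, G q
        = ∫ q in Omega1R lx ly, (A + B * Real.exp (-β*(1-q.1)/ε)) := rfl
    rw [e0, integral_add (integrableOn_const (C := A) hcomp.measure_lt_top.ne) hBexp_int]
    congr 1
    · rw [setIntegral_const, smul_eq_mul, measureReal_def, hvol]; ring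
    · rw [MeasureTheory.integral_const_mul, hprod]
  have hIx_nonneg : 0 ≤ ∫ x in Icc (1-lx) 1, Real.exp (-β*(1-x)/ε) :=
    setIntegral_nonneg measurableSet_Icc (fun x _ => (Real.exp_pos _).le)
  have hIx_le : ∫ x in Icc (1-lx) 1, Real.exp (-β*(1-x)/ε) ≤ ε/β := by
    rw [hIx]
    have he := Real.exp_pos (-β*lx/ε)
    have hεβ : 0 < ε/β := div_pos hε hβ
    have hprod2 : 0 ≤ ε/β * Real.exp (-β*lx/ε) := mul_nonneg hεβ.le he.le
    have expand : ε/β*(1 - Real.exp (-β*lx/ε)) = ε/β - ε/β * Real.exp (-β*lx/ε) := by ring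
    linarith only [hprod2, expand]
  have step2 : ∫ q in Omega1R lx ly, G q ≤ A * lx + B * (ε/β) := by
    rw [hsplitG]
    have e1 : A * (lx * (1-2*ly)) ≤ A * lx := by
      have h1 : lx * (1-2*ly) ≤ lx * 1 :=
        mul_le_mul_of_nonneg_left (by linarith only [hly0]) hlx0.le
      exact mul_le_mul_of_nonneg_left (by linarith only [h1]) hA0
    have e2 : B * ((∫ x in Icc (1-lx) 1, Real.exp (-β*(1-x)/ε)) * (1-2*ly)) ≤ B * (ε/β) := by
      have h1 : (∫ x in Icc (1-lx) 1, Real.exp (-β*(1-x)/ε)) * (1-2*ly) ≤ ε/β := by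
        have h2 : (∫ x in Icc (1-lx) 1, Real.exp (-β*(1-x)/ε)) * (1-2*ly)
            ≤ (∫ x in Icc (1-lx) 1, Real.exp (-β*(1-x)/ε)) * 1 :=
          mul_le_mul_of_nonneg_left (by linarith only [hly0]) hIx_nonneg
        linarith only [h2, hIx_le]
      exact mul_le_mul_of_nonneg_left h1 hB0
    linarith only [e1, e2]
  -- final arithmetic
  have t3 : ε/(s*NR) = s/NR := by
    rw [← hs2, div_eq_div_iff (by positivity) (by positivity)]
    ring
  have t4 : s/NR ≤ 1/NR := by
    rw [div_eq_mul_inv, div_eq_mul_inv]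
    exact mul_le_mul_of_nonneg_right hs1 (by positivity)
  have hAlx : A * lx ≤ 30 * C0 * L / (β * NR) := by
    have hAval : A * lx = (2.5*C0*L/β) * (4*ε + 4*(ε/NR) + 4*(ε/(s*NR))) := by
      rw [hAdef, hlxdef]
      field_simp
    have t2 : ε/NR ≤ 1/NR := by
      rw [div_eq_mul_inv, div_eq_mul_inv]
      exact mul_le_mul_of_nonneg_right hε1 (by positivity)
    have hcoef : 0 ≤ 2.5*C0*L/β :=
      div_nonneg (mul_nonneg (mul_nonneg (by norm_num) hC0.le) hL0.le) hβ.le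
    have hsum : 4*ε + 4*(ε/NR) + 4*(ε/(s*NR)) ≤ 12/NR := by
      rw [t3]
      have h12 : 12/NR = 4*(1/NR) + 4*(1/NR) + 4*(1/NR) := by ring
      rw [h12]
      have := hεNR
      linarith only [hεNR, t2, t4]
    calc A * lx ≤ (2.5*C0*L/β) * (12/NR) := by
          rw [hAval]; exact mul_le_mul_of_nonneg_left hsum hcoef
      _ = 30 * C0 * L / (β * NR) := by field_simp; ring
  have hBe : B * (ε/β) ≤ 40*C0*L/(β^2*NR) + 104*C0/(β*NR) := by
    have hBval : B * (ε/β)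
        = (C0/β) * (8*(h/ε) + 8*k + 32/NR + 16*ε + 32*(ε/(s*NR))) := by
      rw [hBdef]
      field_simp
    have hhe : h/ε = 5*L/(β*NR) := by
      rw [hhval]
      field_simp
    have hsumB : 8*(h/ε) + 8*k + 32/NR + 16*ε + 32*(ε/(s*NR))
        ≤ 40*L/(β*NR) + 104/NR := by
      rw [hhe, t3]
      have e16 : 16*ε ≤ 16*(1/NR) := by linarith only [hεNR]
      have e32 : 32*(s/NR) ≤ 32*(1/NR) := by linarith only [t4]
      have e8 : 8*k ≤ 24/NR := by
        have h1 : 8*k ≤ 8*(3/NR) := mul_le_mul_of_nonneg_left hk3 (by norm_num)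
        have h2 : 8*(3/NR) = 24/NR := by ring
        linarith only [h1, h2]
      have hexpand : 40*L/(β*NR) + 104/NR
          = 8*(5*L/(β*NR)) + 24/NR + 32/NR + 16*(1/NR) + 32*(1/NR) := by ring
      rw [hexpand]
      linarith only [e16, e32, e8]
    have hcoefB : 0 ≤ C0/β := div_nonneg hC0.le hβ.le
    calc B * (ε/β) ≤ (C0/β) * (40*L/(β*NR) + 104/NR) := by
          rw [hBval]; exact mul_le_mul_of_nonneg_left hsumB hcoefB
      _ = 40*C0*L/(β^2*NR) + 104*C0/(β*NR) := by field_simp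
  have hfin3 : 30 * C0 * L / (β * NR) + (40*C0*L/(β^2*NR) + 104*C0/(β*NR))
      ≤ 200 * C0 * (1/β + 1/β^2) * NR⁻¹ * L := by
    have h104 : 104*C0/(β*NR) ≤ 104*C0*L/(β*NR) := by
      rw [div_eq_mul_inv, div_eq_mul_inv]
      apply mul_le_mul_of_nonneg_right _ (inv_nonneg.2 (mul_nonneg hβ.le hNR0.le))
      have h1 : 104*C0*1 ≤ 104*C0*L :=
        mul_le_mul_of_nonneg_left hL1 (by linarith only [hC0] : (0:ℝ) ≤ 104*C0)
      linarith only [h1]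
    have heq : 200 * C0 * (1/β + 1/β^2) * NR⁻¹ * L
        - (30 * C0 * L / (β * NR) + (40*C0*L/(β^2*NR) + 104*C0*L/(β*NR)))
        = C0*L/(β*NR)*66 + C0*L/(β^2*NR)*160 := by
      field_simp
      ring
    have hpos1 : 0 ≤ C0*L/(β*NR)*66 :=
      mul_nonneg (div_nonneg (mul_nonneg hC0.le hL0.le)
        (mul_nonneg hβ.le hNR0.le)) (by norm_num)
    have hpos2 : 0 ≤ C0*L/(β^2*NR)*160 :=
      mul_nonneg (div_nonneg (mul_nonneg hC0.le hL0.le)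
        (mul_nonneg (by positivity) hNR0.le)) (by norm_num)
    linarith only [h104, heq, hpos1, hpos2]
  calc ∫ q in Omega1R lx ly, (|pdx D q| + |pdy D q|)
      ≤ ∫ q in Omega1R lx ly, G q := step1
    _ ≤ A * lx + B * (ε/β) := step2
    _ ≤ 200 * C0 * (1/β + 1/β^2) * NR⁻¹ * L := by linarith only [hAlx, hBe, hfin3]
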